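/- arXiv:2110.13970 — 2 statements merged into one kernel-verified Lean document; each statement's English description precedes it below -/
import Mathlib

section
/- Let $N \ge 1$, let $d_1,\dots,d_N, R$ be positive integers, and let $\mathcal{X} \in \mathbb{R}^{d_1 \times \cdots \times d_N}$ be a fixed tensor. Let $\mathcal{G}^1 \in \mathbb{R}^{1 \times d_1 \times R}$, $\mathcal{G}^n \in \mathbb{R}^{R \times d_n \times R}$ for $1 < n < N$, and $\mathcal{G}^N \in \mathbb{R}^{R \times d_N \times 1}$ be random core tensors whose entries are all i.i.d. Rademacher random variables, and let $\mathcal{T} = [\![\mathcal{G}^1, \dots, \mathcal{G}^N]\!]$ be the corresponding tensor train tensor. Then $\mathbb{E}\,\langle \mathcal{T}, \mathcal{X} \rangle^2 = R^{N-1}\,\|\mathcal{X}\|_F^2$. -/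
open MeasureTheory ProbabilityTheory Matrix Finset

noncomputable section

/-- The Rademacher distribution on `ℝ`: uniform on `{1, -1}`. -/
def radDist : Measure ℝ :=
  (2⁻¹ : ENNReal) • Measure.dirac (1 : ℝ) + (2⁻¹ : ENNReal) • Measure.dirac (-1 : ℝ)

/-- Path-sum contraction of tensor-train cores `G` at multi-index `i`, with the
two boundary bond indices fixed to `a` and `b`. -/
def ttPath {N : ℕ} (d : Fin N → ℕ) (ρ : Fin (N + 1) → ℕ)
    (G : (n : Fin N) → Fin (ρ n.castSucc) → Fin (d n) → Fin (ρ n.succ) → ℝ)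
    (i : (n : Fin N) → Fin (d n)) (a : Fin (ρ 0)) (b : Fin (ρ (Fin.last N))) : ℝ :=
  ∑ r : ((n : Fin (N + 1)) → Fin (ρ n)),
    if r 0 = a ∧ r (Fin.last N) = b then
      ∏ n : Fin N, G n (r n.castSucc) (i n) (r n.succ)
    else 0

lemma integrable_pow_dirac (k : ℕ) (a : ℝ) :
    Integrable (fun x : ℝ => x ^ k) (Measure.dirac a) := by
  constructor
  · exact (measurable_id.pow_const k).aestronglyMeasurable
  · rw [HasFiniteIntegral, lintegral_dirac]
    exact ENNReal.coe_lt_top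

lemma radDist_integral_pow (k : ℕ) :
    ∫ x, x ^ k ∂radDist = if Even k then 1 else 0 := by
  rw [radDist, integral_add_measure, integral_smul_measure, integral_smul_measure,
    integral_dirac, integral_dirac]
  · rcases Nat.even_or_odd k with h | h
    · have h2 : ((2 : ENNReal)⁻¹).toReal = 2⁻¹ := by simp
      simp only [h, h.neg_one_pow, one_pow, if_pos, h2]
      norm_num
    · simp [h, h.neg_one_pow, Nat.not_even_iff_odd.mpr h]
  · exact (integrable_pow_dirac k 1).smul_measure (by norm_num)
  · exact (integrable_pow_dirac k (-1)).smul_measure (by norm_num)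

lemma radDist_compl_pm_one : radDist ({1, -1} : Set ℝ)ᶜ = 0 := by
  have hs : MeasurableSet (({1, -1} : Set ℝ)ᶜ) := by
    measurability
  simp [radDist, Measure.dirac_apply' _ hs, Set.indicator_apply]

lemma indep_integral_finset_prod {ι Ω : Type*} [MeasurableSpace Ω] {μ : Measure Ω}
    [IsProbabilityMeasure μ] (f : ι → Ω → ℝ) (hmeas : ∀ i, Measurable (f i))
    (hindep : iIndepFun f μ) (s : Finset ι) :
    ∫ ω, ∏ i ∈ s, f i ω ∂μ = ∏ i ∈ s, ∫ ω, f i ω ∂μ := by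
  classical
  induction s using Finset.induction_on with
  | empty => simp
  | @insert a s hi ih =>
    have hind : IndepFun (∏ j ∈ s, f j) (f a) μ :=
      hindep.indepFun_finsetProd_of_notMem hmeas hi
    have hprodmeas : AEStronglyMeasurable (∏ j ∈ s, f j) μ := by
      have h : AEStronglyMeasurable (fun ω => ∏ i ∈ s, f i ω) μ :=
        (Finset.measurable_prod s (fun j _ => hmeas j)).aestronglyMeasurable
      exact h.congr (by filter_upwards with ω; simp [Finset.prod_apply])
    have hmul := hind.symm.integral_mul_eq_mul_integral (hmeas a).aestronglyMeasurable hprodmeas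
    have h1 : ∫ ω, (f a * ∏ j ∈ s, f j) ω ∂μ = ∫ ω, ∏ i ∈ insert a s, f i ω ∂μ := by
      apply integral_congr_ae; filter_upwards with ω
      simp [Finset.prod_insert hi, Finset.prod_apply]
    have h2 : ∫ ω, (∏ j ∈ s, f j) ω ∂μ = ∫ ω, ∏ i ∈ s, f i ω ∂μ := by
      apply integral_congr_ae; filter_upwards with ω; simp [Finset.prod_apply]
    rw [Finset.prod_insert hi, ← ih, ← h2, ← h1]
    exact hmul

/-- Product over the whole fintype of `f ∘ g` as product of powers of fiber cardinalities. -/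
lemma prod_comp_univ {α β M : Type*} [Fintype α] [Fintype β] [DecidableEq β] [CommMonoid M]
    (g : α → β) (f : β → M) :
    ∏ a, f (g a) = ∏ b, f b ^ (Finset.univ.filter (fun a => g a = b)).card := by
  refine (Finset.prod_comp (s := (Finset.univ : Finset α)) f g).trans ?_
  refine Finset.prod_subset (Finset.subset_univ _) ?_
  intro b _ hb
  have h0 : (Finset.univ.filter (fun a => g a = b)).card = 0 := by
    rw [Finset.card_eq_zero, Finset.filter_eq_empty_iff]
    intro a _
    exact fun h => hb (Finset.mem_image.mpr ⟨a, Finset.mem_univ a, h⟩)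
  simp [h0]

/-- Expected isometry (second moment) for a TT tensor with i.i.d. Rademacher core
entries: `𝔼⟨𝒯, 𝒳⟩² = R^(N-1) ‖𝒳‖_F²`. -/
theorem tt_moment_rademacher_sq
    {Ω : Type} [MeasurableSpace Ω] (μ : Measure Ω) [IsProbabilityMeasure μ]
    (N : ℕ) (hN : 1 ≤ N) (d : Fin N → ℕ) (hd : ∀ n, 0 < d n) (R : ℕ) (hR : 0 < R)
    (ρ : Fin (N + 1) → ℕ) (hρ0 : ρ 0 = 1) (hρlast : ρ (Fin.last N) = 1)
    (hρmid : ∀ n : Fin (N + 1), n ≠ 0 → n ≠ Fin.last N → ρ n = R)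
    (X : ((n : Fin N) → Fin (d n)) → ℝ)
    (G : Ω → (n : Fin N) → Fin (ρ n.castSucc) → Fin (d n) → Fin (ρ n.succ) → ℝ)
    (hGmeas : ∀ n a i b, Measurable (fun ω => G ω n a i b))
    (hGdist : ∀ n a i b, Measure.map (fun ω => G ω n a i b) μ = radDist)
    (hGindep : iIndepFun
      (fun p : (Σ n : Fin N, Fin (ρ n.castSucc) × Fin (d n) × Fin (ρ n.succ)) =>
        fun ω => G ω p.1 p.2.1 p.2.2.1 p.2.2.2) μ) :
    ∫ ω, (∑ i, X i * ∑ a, ∑ b, ttPath d ρ (G ω) i a b) ^ 2 ∂μ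
      = (R : ℝ) ^ (N - 1) * ∑ i, (X i) ^ 2 := by
  classical
  set E := (Σ n : Fin N, Fin (ρ n.castSucc) × Fin (d n) × Fin (ρ n.succ)) with hE
  set F : E → Ω → ℝ := fun p ω => G ω p.1 p.2.1 p.2.2.1 p.2.2.2 with hF
  set P := ((n : Fin (N + 1)) → Fin (ρ n)) with hP
  set e : ((n : Fin N) → Fin (d n)) → P → Fin N → E := fun i r n => ⟨n, (r n.castSucc, i n, r n.succ)⟩ with he
  set c : ((n : Fin N) → Fin (d n)) → P → E → ℕ :=
    fun i r p => (Finset.univ.filter (fun n => e i r n = p)).card with hcdef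
  have hFmeas : ∀ p : E, Measurable (F p) := fun p => hGmeas p.1 p.2.1 p.2.2.1 p.2.2.2
  -- a.e. values ±1
  have hFae : ∀ p : E, ∀ᵐ ω ∂μ, F p ω = 1 ∨ F p ω = -1 := by
    intro p
    have hs : MeasurableSet (({1, -1} : Set ℝ)ᶜ) := by measurability
    have hmap := hGdist p.1 p.2.1 p.2.2.1 p.2.2.2
    have h0 : μ (F p ⁻¹' ({1, -1} : Set ℝ)ᶜ) = 0 := by
      rw [← Measure.map_apply (hFmeas p) hs, hmap]
      exact radDist_compl_pm_one
    rw [ae_iff]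
    have hset : {ω | ¬(F p ω = 1 ∨ F p ω = -1)} = F p ⁻¹' ({1, -1} : Set ℝ)ᶜ := by
      ext ω; simp [Set.mem_preimage, Set.mem_compl_iff]
    rw [hset]; exact h0
  -- moments
  have hmoment : ∀ (p : E) (k : ℕ), ∫ ω, (F p ω) ^ k ∂μ = if Even k then 1 else 0 := by
    intro p k
    have h1 : ∫ x, x ^ k ∂(Measure.map (F p) μ) = ∫ ω, (F p ω) ^ k ∂μ :=
      integral_map (hFmeas p).aemeasurable (by fun_prop)
    rw [← h1, hGdist p.1 p.2.1 p.2.2.1 p.2.2.2, radDist_integral_pow]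
  -- integrability of products of powers
  have hint : ∀ m : E → ℕ, Integrable (fun ω => ∏ p, (F p ω) ^ (m p)) μ := by
    intro m
    refine Integrable.mono' (integrable_const (1 : ℝ)) ?_ ?_
    · exact (Finset.measurable_prod _ fun p _ =>
        ((hFmeas p).pow_const (m p))).aestronglyMeasurable
    · filter_upwards [ae_all_iff.mpr hFae] with ω hω
      rw [Real.norm_eq_abs, Finset.abs_prod]
      have : ∀ p ∈ Finset.univ, |F p ω ^ m p| = 1 := by
        intro p _
        rw [abs_pow]
        rcases hω p with h | h <;> simp [h]
      rw [Finset.prod_congr rfl this, Finset.prod_const_one]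
  -- expectation of a product of powers
  have hprodint : ∀ m : E → ℕ,
      ∫ ω, ∏ p, (F p ω) ^ (m p) ∂μ = if (∀ p, Even (m p)) then 1 else 0 := by
    intro m
    have hcomp : iIndepFun (fun p ω => (F p ω) ^ (m p)) μ :=
      hGindep.comp (fun p x => x ^ (m p)) (fun p => measurable_id.pow_const (m p))
    rw [indep_integral_finset_prod _ (fun p => (hFmeas p).pow_const (m p)) hcomp]
    by_cases h : ∀ p, Even (m p)
    · rw [if_pos h]
      exact Finset.prod_eq_one (fun p _ => by rw [hmoment, if_pos (h p)])
    · rw [if_neg h]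
      push_neg at h
      obtain ⟨q, hq⟩ := h
      exact Finset.prod_eq_zero (Finset.mem_univ q) (by rw [hmoment, if_neg hq])
  -- values of c
  have hc : ∀ (i : ((n : Fin N) → Fin (d n))) (r : P) (p : E), c i r p = if e i r p.1 = p then 1 else 0 := by
    intro i r p
    simp only [hcdef]
    split_ifs with h
    · rw [Finset.card_eq_one]
      refine ⟨p.1, ?_⟩
      ext n
      simp only [Finset.mem_filter, Finset.mem_univ, true_and, Finset.mem_singleton]
      constructor
      · intro hn; exact congrArg Sigma.fst hn
      · rintro rfl; exact h
    · rw [Finset.card_eq_zero, Finset.filter_eq_empty_iff]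
      intro n _ hn
      apply h
      have hfst : n = p.1 := congrArg Sigma.fst hn
      rw [← hfst]; exact hn
  -- diagonal characterization
  have hdiag : ∀ (i i' : ((n : Fin N) → Fin (d n))) (r r' : P),
      (∀ p : E, Even (c i r p + c i' r' p)) ↔ (i = i' ∧ r = r') := by
    intro i i' r r'
    constructor
    · intro h
      have hee : ∀ n : Fin N, e i r n = e i' r' n := by
        intro n
        have hn := h (e i r n)
        rw [hc, hc] at hn
        rw [if_pos rfl] at hn
        by_cases h2 : e i' r' ((e i r n).1) = e i r n
        · exact h2.symm
        · rw [if_neg h2] at hn; norm_num at hn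
      have hcomp : ∀ n : Fin N,
          r n.castSucc = r' n.castSucc ∧ i n = i' n ∧ r n.succ = r' n.succ := by
        intro n
        have h1 := hee n
        have hx : (r n.castSucc, i n, r n.succ) = (r' n.castSucc, i' n, r' n.succ) :=
          eq_of_heq (Sigma.mk.inj_iff.mp h1).2
        exact ⟨congrArg Prod.fst hx, congrArg (Prod.fst ∘ Prod.snd) hx,
          congrArg (Prod.snd ∘ Prod.snd) hx⟩
      refine ⟨funext fun n => (hcomp n).2.1, funext fun k => ?_⟩
      by_cases hk : k = Fin.last N
      · subst hk
        have hn : (⟨N - 1, by omega⟩ : Fin N).succ = Fin.last N := by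
          ext; simp [Fin.val_succ]; omega
        rw [← hn]
        exact (hcomp _).2.2
      · have hk' : (Fin.castPred k hk).castSucc = k := Fin.castSucc_castPred k hk
        rw [← hk']
        exact (hcomp _).1
    · rintro ⟨rfl, rfl⟩ p
      rw [hc]
      split_ifs
      · exact ⟨1, rfl⟩
      · exact Even.zero
  -- rewriting the bracket sum
  have hab : ∀ (ω : Ω) (i : ((n : Fin N) → Fin (d n))),
      (∑ a, ∑ b, ttPath d ρ (G ω) i a b)
        = ∑ r : P, ∏ n, F (e i r n) ω := by
    intro ω i
    simp only [ttPath]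
    calc ∑ a, ∑ b, ∑ r : P, (if r 0 = a ∧ r (Fin.last N) = b then
            ∏ n : Fin N, G ω n (r n.castSucc) (i n) (r n.succ) else 0)
        = ∑ a, ∑ r : P, ∑ b, (if r 0 = a ∧ r (Fin.last N) = b then
            ∏ n : Fin N, G ω n (r n.castSucc) (i n) (r n.succ) else 0) :=
          Finset.sum_congr rfl (fun a _ => Finset.sum_comm)
      _ = ∑ r : P, ∑ a, ∑ b, (if r 0 = a ∧ r (Fin.last N) = b then
            ∏ n : Fin N, G ω n (r n.castSucc) (i n) (r n.succ) else 0) :=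
          Finset.sum_comm
      _ = ∑ r : P, ∏ n, F (e i r n) ω := by
          refine Finset.sum_congr rfl (fun r _ => ?_)
          simp [ite_and, Finset.sum_ite_eq, hF, he]
  -- product over n as product over edges
  have hpe : ∀ (i : ((n : Fin N) → Fin (d n))) (r : P) (ω : Ω),
      (∏ n, F (e i r n) ω) = ∏ p, (F p ω) ^ (c i r p) := by
    intro i r ω
    exact prod_comp_univ (e i r) (fun p => F p ω)
  -- integrand as a double sum
  have hsq : ∀ ω : Ω, (∑ i, X i * ∑ a, ∑ b, ttPath d ρ (G ω) i a b) ^ 2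
      = ∑ q : ((n : Fin N) → Fin (d n)) × P, ∑ q' : ((n : Fin N) → Fin (d n)) × P,
          (X q.1 * X q'.1) * ∏ p, (F p ω) ^ (c q.1 q.2 p + c q'.1 q'.2 p) := by
    intro ω
    have h1 : (∑ i, X i * ∑ a, ∑ b, ttPath d ρ (G ω) i a b)
        = ∑ q : ((n : Fin N) → Fin (d n)) × P, X q.1 * ∏ n, F (e q.1 q.2 n) ω := by
      rw [Fintype.sum_prod_type]
      exact Finset.sum_congr rfl fun i _ => by rw [hab ω i, Finset.mul_sum]
    rw [h1, sq, Finset.sum_mul_sum]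
    refine Finset.sum_congr rfl fun q _ => Finset.sum_congr rfl fun q' _ => ?_
    rw [hpe, hpe]
    have h2 : ∏ p, (F p ω) ^ (c q.1 q.2 p + c q'.1 q'.2 p)
        = (∏ p, (F p ω) ^ (c q.1 q.2 p)) * ∏ p, (F p ω) ^ (c q'.1 q'.2 p) := by
      rw [← Finset.prod_mul_distrib]
      exact Finset.prod_congr rfl fun p _ => pow_add _ _ _
    rw [h2]; ring
  -- compute the integral
  have hterm : ∀ q q' : ((n : Fin N) → Fin (d n)) × P,
      ∫ ω, (X q.1 * X q'.1) * ∏ p, (F p ω) ^ (c q.1 q.2 p + c q'.1 q'.2 p) ∂μ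
        = if q = q' then X q.1 * X q'.1 else 0 := by
    intro q q'
    rw [integral_const_mul, hprodint]
    have hiff : (∀ p : E, Even (c q.1 q.2 p + c q'.1 q'.2 p)) ↔ q = q' := by
      rw [hdiag q.1 q'.1 q.2 q'.2, Prod.ext_iff]
    by_cases h : q = q'
    · rw [if_pos (hiff.mpr h), if_pos h, mul_one]
    · rw [if_neg (fun hh => h (hiff.mp hh)), if_neg h, mul_zero]
  have hint' : ∀ q q' : ((n : Fin N) → Fin (d n)) × P, Integrable
      (fun ω => (X q.1 * X q'.1) * ∏ p, (F p ω) ^ (c q.1 q.2 p + c q'.1 q'.2 p)) μ :=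
    fun q q' => (hint _).const_mul _
  have hmain : ∫ ω, (∑ i, X i * ∑ a, ∑ b, ttPath d ρ (G ω) i a b) ^ 2 ∂μ
      = ∑ q : ((n : Fin N) → Fin (d n)) × P, (X q.1) ^ 2 := by
    calc ∫ ω, (∑ i, X i * ∑ a, ∑ b, ttPath d ρ (G ω) i a b) ^ 2 ∂μ
        = ∫ ω, ∑ q : ((n : Fin N) → Fin (d n)) × P, ∑ q' : ((n : Fin N) → Fin (d n)) × P,
            (X q.1 * X q'.1) * ∏ p, (F p ω) ^ (c q.1 q.2 p + c q'.1 q'.2 p) ∂μ := by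
          exact integral_congr_ae (by filter_upwards with ω; rw [hsq ω])
      _ = ∑ q : ((n : Fin N) → Fin (d n)) × P, ∑ q' : ((n : Fin N) → Fin (d n)) × P, ∫ ω,
            (X q.1 * X q'.1) * ∏ p, (F p ω) ^ (c q.1 q.2 p + c q'.1 q'.2 p) ∂μ := by
          rw [integral_finset_sum _
            (fun q _ => integrable_finset_sum _ (fun q' _ => hint' q q'))]
          exact Finset.sum_congr rfl fun q _ =>
            integral_finset_sum _ (fun q' _ => hint' q q')
      _ = ∑ q : ((n : Fin N) → Fin (d n)) × P, ∑ q' : ((n : Fin N) → Fin (d n)) × P, (if q = q' then X q.1 * X q'.1 else 0) :=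
          Finset.sum_congr rfl fun q _ => Finset.sum_congr rfl fun q' _ => hterm q q'
      _ = ∑ q : ((n : Fin N) → Fin (d n)) × P, (X q.1) ^ 2 := by
          refine Finset.sum_congr rfl fun q _ => ?_
          rw [Finset.sum_ite_eq, if_pos (Finset.mem_univ q), sq]
  -- count the paths
  have h0last : (0 : Fin (N + 1)) ≠ Fin.last N := by
    intro h
    have := congrArg Fin.val h
    simp [Fin.last] at this
    omega
  have hcardP : Fintype.card P = R ^ (N - 1) := by
    have hpi : Fintype.card P = ∏ n : Fin (N + 1), Fintype.card (Fin (ρ n)) :=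
      Fintype.card_pi
    rw [hpi]
    simp only [Fintype.card_fin]
    have hsub : ({0, Fin.last N} : Finset (Fin (N + 1))) ⊆ Finset.univ :=
      Finset.subset_univ _
    rw [← Finset.prod_sdiff hsub]
    have hnotmem : (0 : Fin (N + 1)) ∉ ({Fin.last N} : Finset (Fin (N + 1))) := by
      simp [h0last]
    have hs2 : ({0, Fin.last N} : Finset (Fin (N + 1))).card = 2 := by
      rw [Finset.card_insert_of_notMem hnotmem, Finset.card_singleton]
    have hps : ∏ n ∈ ({0, Fin.last N} : Finset (Fin (N + 1))), ρ n = 1 := by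
      rw [Finset.prod_insert hnotmem, Finset.prod_singleton, hρ0, hρlast]
      norm_num
    have hpd : ∏ n ∈ Finset.univ \ ({0, Fin.last N} : Finset (Fin (N + 1))), ρ n
        = R ^ (N - 1) := by
      rw [Finset.prod_congr rfl (fun n hn => ?_), Finset.prod_const]
      · rw [Finset.card_sdiff_of_subset hsub, hs2, Finset.card_univ, Fintype.card_fin]
        congr 1
      · have hmem := Finset.mem_sdiff.mp hn
        have h2 := hmem.2
        simp only [Finset.mem_insert, Finset.mem_singleton, not_or] at h2
        exact hρmid n h2.1 h2.2
    rw [hpd, hps, mul_one]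
  calc ∫ ω, (∑ i, X i * ∑ a, ∑ b, ttPath d ρ (G ω) i a b) ^ 2 ∂μ
      = ∑ q : ((n : Fin N) → Fin (d n)) × P, (X q.1) ^ 2 := hmain
    _ = ∑ i : ((n : Fin N) → Fin (d n)), ∑ _r : P, (X i) ^ 2 := Fintype.sum_prod_type _
    _ = ∑ i : ((n : Fin N) → Fin (d n)), (Fintype.card P : ℝ) * (X i) ^ 2 :=
        Finset.sum_congr rfl (fun i _ => by
          rw [Finset.sum_const, Finset.card_univ, nsmul_eq_mul])
    _ = (Fintype.card P : ℝ) * ∑ i, (X i) ^ 2 := (Finset.mul_sum _ _ _).symm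
    _ = (R : ℝ) ^ (N - 1) * ∑ i, (X i) ^ 2 := by
        rw [hcardP]
        push_cast
        ring

end
end

section
/- Let $N, k \ge 1$, let $d_1,\dots,d_N, R$ be positive integers, and let $\mathcal{X} \in \mathbb{R}^{d_1 \times \cdots \times d_N}$ be a fixed tensor. Let $\mathcal{T}_1, \dots, \mathcal{T}_k$ be independent tensor train tensors, each of the form $\mathcal{T}_i = [\![\mathcal{G}^{1,i}, \dots, \mathcal{G}^{N,i}]\!]$ where all core entries are i.i.d. standard Gaussian $\mathcal{N}(0,1)$, and define the tensorized Gaussian random projection $f^{TT}_R : \mathbb{R}^{d_1 \times \cdots \times d_N} \to \mathbb{R}^k$ component-wise by $(f^{TT}_R(\mathcal{X}))_i = \frac{1}{\sqrt{k R^{N-1}}} \langle \mathcal{T}_i, \mathcal{X} \rangle$ for $i \in [k]$. Then $\mathbb{E}\,\|f^{TT}_R(\mathcal{X})\|_2^2 = \|\mathcal{X}\|_F^2$. -/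
open MeasureTheory ProbabilityTheory Matrix Finset Real
open scoped NNReal ENNReal

noncomputable section

lemma myE_int : Integrable (fun x : ℝ => Real.exp (-(2⁻¹ : ℝ) * x ^ 2)) := by
  exact integrable_exp_neg_mul_sq (by norm_num)

lemma myE1_int : Integrable (fun x : ℝ => x * Real.exp (-(2⁻¹ : ℝ) * x ^ 2)) := by
  exact integrable_mul_exp_neg_mul_sq (by norm_num)

lemma myE2_int : Integrable (fun x : ℝ => x ^ 2 * Real.exp (-(2⁻¹ : ℝ) * x ^ 2)) := by
  have := integrable_rpow_mul_exp_neg_mul_sq (b := 2⁻¹) (by norm_num) (s := 2) (by norm_num)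
  simpa [Real.rpow_natCast] using this

lemma myE1_eq : ∫ x : ℝ, x * Real.exp (-(2⁻¹ : ℝ) * x ^ 2) = 0 := by
  have hd : ∀ x : ℝ, HasDerivAt (fun x : ℝ => -Real.exp (-(2⁻¹ : ℝ) * x ^ 2))
      (x * Real.exp (-(2⁻¹ : ℝ) * x ^ 2)) x := by
    intro x
    have h1 : HasDerivAt (fun x : ℝ => -(2⁻¹ : ℝ) * x ^ 2) (-(2⁻¹ : ℝ) * (2 * x)) x := by
      simpa using ((hasDerivAt_pow 2 x).const_mul (-(2⁻¹ : ℝ)))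
    have : HasDerivAt (fun x : ℝ => -Real.exp (-(2⁻¹ : ℝ) * x ^ 2)) _ x := (h1.exp).neg
    convert this using 1
    ring
  exact integral_eq_zero_of_hasDerivAt_of_integrable hd myE1_int myE_int.neg

lemma myE2_eq : ∫ x : ℝ, x ^ 2 * Real.exp (-(2⁻¹ : ℝ) * x ^ 2) = Real.sqrt (2 * π) := by
  have hd : ∀ x : ℝ, HasDerivAt (fun x : ℝ => x * Real.exp (-(2⁻¹ : ℝ) * x ^ 2))
      (Real.exp (-(2⁻¹ : ℝ) * x ^ 2) - x ^ 2 * Real.exp (-(2⁻¹ : ℝ) * x ^ 2)) x := by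
    intro x
    have h1 : HasDerivAt (fun x : ℝ => -(2⁻¹ : ℝ) * x ^ 2) (-(2⁻¹ : ℝ) * (2 * x)) x := by
      simpa using ((hasDerivAt_pow 2 x).const_mul (-(2⁻¹ : ℝ)))
    have : HasDerivAt (fun x : ℝ => x * Real.exp (-(2⁻¹ : ℝ) * x ^ 2)) _ x :=
      (hasDerivAt_id x).mul h1.exp
    convert this using 1
    simp [id]
    ring
  have h0 := integral_eq_zero_of_hasDerivAt_of_integrable hd (myE_int.sub myE2_int) myE1_int
  have hg : ∫ x : ℝ, Real.exp (-(2⁻¹ : ℝ) * x ^ 2) = Real.sqrt (2 * π) := by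
    rw [integral_gaussian]
    norm_num [mul_comm]
  rw [integral_sub myE_int myE2_int] at h0
  linarith [h0, hg]


lemma pdf_eq (x : ℝ) : gaussianPDFReal 0 1 x
    = (Real.sqrt (2 * π))⁻¹ * Real.exp (-(2⁻¹ : ℝ) * x ^ 2) := by
  unfold gaussianPDFReal
  congr 1
  · norm_num
  · congr 1
    push_cast
    ring

lemma gr_eq : gaussianReal 0 1
    = volume.withDensity (fun x => ENNReal.ofReal (gaussianPDFReal 0 1 x)) := by
  rw [gaussianReal]
  norm_num
  rfl

lemma integrable_gr (φ : ℝ → ℝ) (hφ : Measurable φ)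
    (h : Integrable (fun x => gaussianPDFReal 0 1 x * φ x)) :
    Integrable φ (gaussianReal 0 1) := by
  rw [gr_eq]
  have hm : Measurable fun x => (gaussianPDFReal 0 1 x).toNNReal :=
    (measurable_gaussianPDFReal 0 1).real_toNNReal
  have : (fun x => ENNReal.ofReal (gaussianPDFReal 0 1 x))
      = fun x => ((gaussianPDFReal 0 1 x).toNNReal : ℝ≥0∞) := rfl
  rw [this, integrable_withDensity_iff_integrable_smul hm]
  refine h.congr (Filter.Eventually.of_forall fun x => ?_)
  simp [NNReal.smul_def, Real.coe_toNNReal _ (gaussianPDFReal_nonneg 0 1 x)]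

lemma integral_gr (φ : ℝ → ℝ) :
    ∫ x, φ x ∂(gaussianReal 0 1) = ∫ x, gaussianPDFReal 0 1 x * φ x := by
  rw [gr_eq]
  have hm : Measurable fun x => (gaussianPDFReal 0 1 x).toNNReal :=
    (measurable_gaussianPDFReal 0 1).real_toNNReal
  have : (fun x => ENNReal.ofReal (gaussianPDFReal 0 1 x))
      = fun x => ((gaussianPDFReal 0 1 x).toNNReal : ℝ≥0∞) := rfl
  rw [this, integral_withDensity_eq_integral_smul hm]
  refine integral_congr_ae (Filter.Eventually.of_forall fun x => ?_)
  simp [NNReal.smul_def, Real.coe_toNNReal _ (gaussianPDFReal_nonneg 0 1 x)]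

lemma sqrt2pi_pos : 0 < Real.sqrt (2 * π) := Real.sqrt_pos.2 (by positivity)

lemma integrable_pow_gr (m : ℕ) (hm : m ≤ 2) :
    Integrable (fun x : ℝ => x ^ m) (gaussianReal 0 1) := by
  interval_cases m
  · simpa using (integrable_const (1 : ℝ) (μ := gaussianReal 0 1))
  · refine integrable_gr _ (measurable_id.pow_const 1) ?_
    simp only [pdf_eq, pow_one, mul_assoc]
    exact (myE1_int.congr (Filter.Eventually.of_forall fun x => by ring)).const_mul _
  · refine integrable_gr _ (measurable_id.pow_const 2) ?_
    simp only [pdf_eq, mul_assoc]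
    exact (myE2_int.congr (Filter.Eventually.of_forall fun x => by ring)).const_mul _

lemma integral_pow_gr (m : ℕ) (hm : m ≤ 2) :
    ∫ x, x ^ m ∂(gaussianReal 0 1) = if m = 1 then 0 else 1 := by
  interval_cases m
  · simp
  · rw [integral_gr]
    simp only [pdf_eq, pow_one, mul_assoc]
    rw [integral_const_mul]
    have : ∫ x : ℝ, Real.exp (-(2⁻¹ : ℝ) * x ^ 2) * x = 0 := by
      rw [← myE1_eq]
      exact integral_congr_ae (Filter.Eventually.of_forall fun x => by ring)
    rw [this, mul_zero]
    simp
  · rw [integral_gr]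
    simp only [pdf_eq, mul_assoc]
    rw [integral_const_mul]
    have : ∫ x : ℝ, Real.exp (-(2⁻¹ : ℝ) * x ^ 2) * x ^ 2 = Real.sqrt (2 * π) := by
      rw [← myE2_eq]
      exact integral_congr_ae (Filter.Eventually.of_forall fun x => by ring)
    rw [this, if_neg (by norm_num)]
    exact inv_mul_cancel₀ (ne_of_gt sqrt2pi_pos)

lemma moment_of_gauss {Ω : Type} [MeasurableSpace Ω] {μ : Measure Ω} {g : Ω → ℝ}
    (hg : Measurable g) (hmap : Measure.map g μ = gaussianReal 0 1) (m : ℕ) (hm : m ≤ 2) :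
    Integrable (fun ω => g ω ^ m) μ ∧
      ∫ ω, g ω ^ m ∂μ = if m = 1 then 0 else 1 := by
  have hsm : AEStronglyMeasurable (fun x : ℝ => x ^ m) (Measure.map g μ) :=
    (measurable_id.pow_const m).aestronglyMeasurable
  constructor
  · have h0 : Integrable ((fun x : ℝ => x ^ m) ∘ g) μ := by
      rw [← integrable_map_measure hsm hg.aemeasurable, hmap]
      exact integrable_pow_gr m hm
    exact h0
  · have h1 : ∫ x, (fun x : ℝ => x ^ m) x ∂(Measure.map g μ) = ∫ ω, g ω ^ m ∂μ :=
      integral_map hg.aemeasurable hsm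
    rw [hmap, integral_pow_gr m hm] at h1
    exact h1.symm

lemma indep_prod_integral {Ω ι : Type} [MeasurableSpace Ω] {μ : Measure Ω}
    [IsProbabilityMeasure μ] [DecidableEq ι] (Y : ι → Ω → ℝ)
    (hind : iIndepFun Y μ)
    (hmeas : ∀ p, Measurable (Y p)) (hint : ∀ p, Integrable (Y p) μ) (s : Finset ι) :
    Integrable (fun ω => ∏ p ∈ s, Y p ω) μ ∧
      ∫ ω, ∏ p ∈ s, Y p ω ∂μ = ∏ p ∈ s, ∫ ω, Y p ω ∂μ := by
  classical
  induction s using Finset.induction_on with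
  | empty => simp
  | @insert a s ha ih =>
    have hI : ProbabilityTheory.IndepFun (Y a) (∏ j ∈ s, Y j) μ :=
      (hind.indepFun_finset_prod_of_notMem hmeas ha).symm
    have hprodeq : (fun ω => ∏ p ∈ s, Y p ω) = ∏ j ∈ s, Y j := by
      funext ω; simp [Finset.prod_apply]
    have hint2 : Integrable (∏ j ∈ s, Y j) μ := by rw [← hprodeq]; exact ih.1
    constructor
    · have := hI.integrable_mul (hint a) hint2
      refine this.congr (Filter.Eventually.of_forall fun ω => ?_)
      simp [Finset.prod_insert ha, Finset.prod_apply]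
    · rw [Finset.prod_insert ha]
      have heq : ∀ ω, ∏ p ∈ insert a s, Y p ω = Y a ω * (∏ j ∈ s, Y j) ω := by
        intro ω; rw [Finset.prod_insert ha]; simp [Finset.prod_apply]
      rw [integral_congr_ae (Filter.Eventually.of_forall heq)]
      have hmul := hI.integral_mul_eq_mul_integral (hint a).aestronglyMeasurable hint2.aestronglyMeasurable
      have : ∫ x, Y a x * (∏ j ∈ s, Y j) x ∂μ = ∫ x, (Y a * ∏ j ∈ s, Y j) x ∂μ := rfl
      rw [this]
      rw [show (∫ x, (Y a * ∏ j ∈ s, Y j) x ∂μ) = ∫ x, (Y a * ∏ j ∈ s, Y j) x ∂μ from rfl]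
      calc ∫ x, (Y a * ∏ j ∈ s, Y j) x ∂μ
          = (∫ ω, Y a ω ∂μ) * ∫ ω, (∏ j ∈ s, Y j) ω ∂μ := hmul
        _ = (∫ ω, Y a ω ∂μ) * ∏ p ∈ s, ∫ ω, Y p ω ∂μ := by
            rw [← hprodeq] at *; rw [ih.2]

lemma prod_comp_to_univ {α ι : Type} [Fintype α] [Fintype ι] [DecidableEq ι]
    (P : α → ι) (h : ι → ℝ) :
    ∏ a : α, h (P a) = ∏ y : ι, h y ^ (Finset.univ.filter (fun a => P a = y)).card := by
  rw [Finset.prod_comp (M := ℝ) h P]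
  refine Finset.prod_subset (Finset.subset_univ _) fun y _ hy => ?_
  rw [Finset.filter_eq_empty_iff.mpr, Finset.card_empty, pow_zero]
  intro a _
  exact fun hP => hy (Finset.mem_image.mpr ⟨a, Finset.mem_univ a, hP⟩)




abbrev TtIdx (N k : ℕ) (d : Fin N → ℕ) (ρ : Fin (N + 1) → ℕ) : Type :=
  Fin k × (Σ n : Fin N, Fin (ρ n.castSucc) × Fin (d n) × Fin (ρ n.succ))

abbrev TtI (N : ℕ) (d : Fin N → ℕ) : Type := (n : Fin N) → Fin (d n)

abbrev TtR (N : ℕ) (ρ : Fin (N + 1) → ℕ) : Type := (n : Fin (N + 1)) → Fin (ρ n)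

def ttP {N k : ℕ} {d : Fin N → ℕ} {ρ : Fin (N + 1) → ℕ} (κ : Fin k)
    (i : TtI N d) (r : TtR N ρ) : Fin N → TtIdx N k d ρ :=
  fun n => (κ, ⟨n, (r n.castSucc, i n, r n.succ)⟩)

def ttG {Ω : Type} {N k : ℕ} {d : Fin N → ℕ} {ρ : Fin (N + 1) → ℕ}
    (G : Ω → Fin k → (n : Fin N) → Fin (ρ n.castSucc) → Fin (d n) → Fin (ρ n.succ) → ℝ)
    (p : TtIdx N k d ρ) (ω : Ω) : ℝ :=
  G ω p.1 p.2.1 p.2.2.1 p.2.2.2.1 p.2.2.2.2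

def ttCnt {α ι : Type} [Fintype α] [DecidableEq ι] (p q : α → ι) (y : ι) : ℕ :=
  (Finset.univ.filter (fun a => p a = y)).card + (Finset.univ.filter (fun a => q a = y)).card

set_option maxHeartbeats 1000000 in
/-- Expected isometry of the tensorized Gaussian random projection `f^TT_R`:
`𝔼 ‖f^TT_R(𝒳)‖₂² = ‖𝒳‖_F²`. -/
theorem tt_gaussian_rp_expected_isometry
    {Ω : Type} [MeasurableSpace Ω] (μ : Measure Ω) [IsProbabilityMeasure μ]
    (N k : ℕ) (hN : 1 ≤ N) (hk : 1 ≤ k)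
    (d : Fin N → ℕ) (hd : ∀ n, 0 < d n) (R : ℕ) (hR : 0 < R)
    (ρ : Fin (N + 1) → ℕ) (hρ0 : ρ 0 = 1) (hρlast : ρ (Fin.last N) = 1)
    (hρmid : ∀ n : Fin (N + 1), n ≠ 0 → n ≠ Fin.last N → ρ n = R)
    (X : ((n : Fin N) → Fin (d n)) → ℝ)
    (G : Ω → Fin k → (n : Fin N) → Fin (ρ n.castSucc) → Fin (d n) → Fin (ρ n.succ) → ℝ)
    (hGmeas : ∀ κ n a i b, Measurable (fun ω => G ω κ n a i b))
    (hGdist : ∀ κ n a i b, Measure.map (fun ω => G ω κ n a i b) μ = gaussianReal 0 1)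
    (hGindep : iIndepFun
      (fun p : Fin k × (Σ n : Fin N, Fin (ρ n.castSucc) × Fin (d n) × Fin (ρ n.succ)) =>
        fun ω => G ω p.1 p.2.1 p.2.2.1 p.2.2.2.1 p.2.2.2.2) μ)
    (f : Ω → Fin k → ℝ)
    (hf : ∀ ω κ, f ω κ = (1 / Real.sqrt ((k : ℝ) * (R : ℝ) ^ (N - 1))) *
      ∑ i, X i * ∑ a, ∑ b, ttPath d ρ (G ω κ) i a b) :
    ∫ ω, ∑ κ, (f ω κ) ^ 2 ∂μ = ∑ i, (X i) ^ 2 := by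
  classical
  set c : ℝ := 1 / Real.sqrt ((k : ℝ) * (R : ℝ) ^ (N - 1)) with hcdef
  have hg_meas : ∀ p : TtIdx N k d ρ, Measurable (ttG G p) :=
    fun p => hGmeas p.1 p.2.1 p.2.2.1 p.2.2.2.1 p.2.2.2.2
  have hg_dist : ∀ p : TtIdx N k d ρ, Measure.map (ttG G p) μ = gaussianReal 0 1 :=
    fun p => hGdist p.1 p.2.1 p.2.2.1 p.2.2.2.1 p.2.2.2.2
  have hg_indep : iIndepFun (ttG G) μ := hGindep
  -- fiber cardinality bound
  have hfiber : ∀ (κ : Fin k) (i : TtI N d) (r : TtR N ρ) (y : TtIdx N k d ρ),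
      (Finset.univ.filter (fun n => ttP κ i r n = y)).card ≤ 1 := by
    intro κ i r y
    refine Finset.card_le_one.mpr ?_
    intro a ha b hb
    have ha' := (Finset.mem_filter.mp ha).2
    have hb' := (Finset.mem_filter.mp hb).2
    have h := ha'.trans hb'.symm
    have := congrArg (fun z : TtIdx N k d ρ => z.2.1) h
    simpa [ttP] using this
  have hm2 : ∀ (κ : Fin k) (i j : TtI N d) (r s : TtR N ρ) (y : TtIdx N k d ρ),
      ttCnt (ttP κ i r) (ttP κ j s) y ≤ 2 := by
    intro κ i j r s y
    have := add_le_add (hfiber κ i r y) (hfiber κ j s y)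
    simpa [ttCnt] using this
  -- the monomial integral
  have hmono : ∀ (m : TtIdx N k d ρ → ℕ), (∀ y, m y ≤ 2) →
      Integrable (fun ω => ∏ y : TtIdx N k d ρ, ttG G y ω ^ m y) μ ∧
      ∫ ω, ∏ y : TtIdx N k d ρ, ttG G y ω ^ m y ∂μ
        = ∏ y : TtIdx N k d ρ, (if m y = 1 then (0:ℝ) else 1) := by
    intro m hm
    have hY_meas : ∀ p : TtIdx N k d ρ, Measurable (fun ω => ttG G p ω ^ m p) :=
      fun p => (hg_meas p).pow_const _
    have hmom := fun p : TtIdx N k d ρ =>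
      moment_of_gauss (hg_meas p) (hg_dist p) (m p) (hm p)
    have hind2 : iIndepFun
        (fun p : TtIdx N k d ρ => fun ω => ttG G p ω ^ m p) μ :=
      hg_indep.comp (fun p (x : ℝ) => x ^ m p) (fun p => measurable_id.pow_const _)
    have h := indep_prod_integral (fun p ω => ttG G p ω ^ m p) hind2 hY_meas
      (fun p => (hmom p).1) Finset.univ
    exact ⟨h.1, h.2.trans (Finset.prod_congr rfl fun y _ => (hmom y).2)⟩
  -- path equality criterion
  have hpatheq : ∀ (κ : Fin k) (i j : TtI N d) (r s : TtR N ρ),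
      (∀ n, ttP κ i r n = ttP κ j s n) → i = j ∧ r = s := by
    intro κ i j r s hall
    have hc : ∀ n, r n.castSucc = s n.castSucc ∧ i n = j n ∧ r n.succ = s n.succ := by
      intro n
      have h2 := congrArg Prod.snd (hall n)
      have h3 : ((r n.castSucc, i n, r n.succ) : Fin (ρ n.castSucc) × Fin (d n) × Fin (ρ n.succ))
          = (s n.castSucc, j n, s n.succ) :=
        eq_of_heq (Sigma.mk.inj_iff.mp h2).2
      simpa [Prod.ext_iff] using h3
    constructor
    · funext n; exact (hc n).2.1
    · funext t
      refine Fin.lastCases ?_ (fun n => (hc n).1) t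
      have hn1 : (⟨N - 1, by omega⟩ : Fin N).succ = Fin.last N := by
        ext; simp [Fin.last]; omega
      have := (hc ⟨N - 1, by omega⟩).2.2
      rwa [hn1] at this
  -- per-pair integral value
  have hval : ∀ (κ : Fin k) (i j : TtI N d) (r s : TtR N ρ),
      ∫ ω, ∏ y : TtIdx N k d ρ, ttG G y ω ^ ttCnt (ttP κ i r) (ttP κ j s) y ∂μ
        = if i = j ∧ r = s then 1 else 0 := by
    intro κ i j r s
    rw [(hmono _ (hm2 κ i j r s)).2]
    by_cases h : i = j ∧ r = s
    · rw [if_pos h]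
      obtain ⟨rfl, rfl⟩ := h
      refine Finset.prod_eq_one fun y _ => ?_
      rw [if_neg]
      simp only [ttCnt]
      omega
    · rw [if_neg h]
      obtain ⟨n₀, hn₀⟩ : ∃ n, ttP κ i r n ≠ ttP κ j s n := by
        by_contra hcon
        push_neg at hcon
        exact h (hpatheq κ i j r s hcon)
      refine Finset.prod_eq_zero (Finset.mem_univ (ttP κ i r n₀)) ?_
      rw [if_pos]
      have h1 : (Finset.univ.filter (fun n => ttP κ i r n = ttP κ i r n₀)).card = 1 := by
        refine le_antisymm (hfiber κ i r _) ?_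
        exact Finset.card_pos.mpr ⟨n₀, Finset.mem_filter.mpr ⟨Finset.mem_univ _, rfl⟩⟩
      have h2 : (Finset.univ.filter (fun n => ttP κ j s n = ttP κ i r n₀)).card = 0 := by
        rw [Finset.card_eq_zero, Finset.filter_eq_empty_iff]
        intro n _ hn
        have hfst := congrArg (fun z : TtIdx N k d ρ => z.2.1) hn
        have : n = n₀ := by simpa [ttP] using hfst
        subst this
        exact hn₀ hn.symm
      simp only [ttCnt, h1, h2]
  -- pointwise expansion
  have hpoint : ∀ ω (κ : Fin k), (f ω κ) ^ 2 = ∑ w : TtI N d × TtR N ρ, ∑ w' : TtI N d × TtR N ρ,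
      (c ^ 2 * (X w.1 * X w'.1)) *
        ∏ y : TtIdx N k d ρ, ttG G y ω ^ ttCnt (ttP κ w.1 w.2) (ttP κ w'.1 w'.2) y := by
    intro ω κ
    haveI hsub0 : Subsingleton (Fin (ρ 0)) := by rw [hρ0]; exact Fin.subsingleton_one
    haveI hsubl : Subsingleton (Fin (ρ (Fin.last N))) := by
      rw [hρlast]; exact Fin.subsingleton_one
    have hTT : ∀ i : TtI N d, (∑ a, ∑ b, ttPath d ρ (G ω κ) i a b)
        = ∑ r : TtR N ρ, ∏ n, ttG G (ttP κ i r n) ω := by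
      intro i
      simp only [ttPath]
      have hstep : ∀ (a : Fin (ρ 0)) (b : Fin (ρ (Fin.last N))),
          (∑ r : TtR N ρ, if r 0 = a ∧ r (Fin.last N) = b then
              ∏ n : Fin N, G ω κ n (r n.castSucc) (i n) (r n.succ) else 0)
            = ∑ r : TtR N ρ, ∏ n, ttG G (ttP κ i r n) ω := by
        intro a b
        refine Finset.sum_congr rfl fun r _ => ?_
        rw [if_pos ⟨Subsingleton.elim _ _, Subsingleton.elim _ _⟩]
        rfl
      calc (∑ a, ∑ b, ∑ r : TtR N ρ, if r 0 = a ∧ r (Fin.last N) = b then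
              ∏ n : Fin N, G ω κ n (r n.castSucc) (i n) (r n.succ) else 0)
          = ∑ _a : Fin (ρ 0), ∑ _b : Fin (ρ (Fin.last N)),
              ∑ r : TtR N ρ, ∏ n, ttG G (ttP κ i r n) ω := by
            exact Finset.sum_congr rfl fun a _ => Finset.sum_congr rfl fun b _ => hstep a b
        _ = ∑ r : TtR N ρ, ∏ n, ttG G (ttP κ i r n) ω := by
            rw [Finset.sum_const, Finset.sum_const, Finset.card_univ, Finset.card_univ]
            simp [hρ0, hρlast]
    have hS : f ω κ = c * ∑ w : TtI N d × TtR N ρ, X w.1 * ∏ n, ttG G (ttP κ w.1 w.2 n) ω := by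
      rw [hf ω κ]
      congr 1
      calc (∑ i, X i * ∑ a, ∑ b, ttPath d ρ (G ω κ) i a b)
          = ∑ i : TtI N d, ∑ r : TtR N ρ, X i * ∏ n, ttG G (ttP κ i r n) ω := by
            refine Finset.sum_congr rfl fun i _ => ?_
            rw [hTT i, Finset.mul_sum]
        _ = ∑ w : TtI N d × TtR N ρ, X w.1 * ∏ n, ttG G (ttP κ w.1 w.2 n) ω :=
            (Fintype.sum_prod_type (f := fun w : TtI N d × TtR N ρ =>
              X w.1 * ∏ n, ttG G (ttP κ w.1 w.2 n) ω)).symm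
    rw [hS, mul_pow, sq (∑ w : TtI N d × TtR N ρ, X w.1 * ∏ n, ttG G (ttP κ w.1 w.2 n) ω),
      Finset.sum_mul_sum, Finset.mul_sum]
    refine Finset.sum_congr rfl fun w _ => ?_
    rw [Finset.mul_sum]
    refine Finset.sum_congr rfl fun w' _ => ?_
    have hprod : (∏ n, ttG G (ttP κ w.1 w.2 n) ω) * (∏ n, ttG G (ttP κ w'.1 w'.2 n) ω)
        = ∏ y : TtIdx N k d ρ, ttG G y ω ^ ttCnt (ttP κ w.1 w.2) (ttP κ w'.1 w'.2) y := by
      rw [prod_comp_to_univ (ttP κ w.1 w.2) (fun y => ttG G y ω),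
        prod_comp_to_univ (ttP κ w'.1 w'.2) (fun y => ttG G y ω),
        ← Finset.prod_mul_distrib]
      exact Finset.prod_congr rfl fun y _ => by rw [← pow_add]; rfl
    rw [← hprod]
    ring
  -- rewrite the integrand as one big sum
  have hrw : (fun ω => ∑ κ, (f ω κ) ^ 2) = fun ω =>
      ∑ z : Fin k × (TtI N d × TtR N ρ) × (TtI N d × TtR N ρ),
        (c ^ 2 * (X z.2.1.1 * X z.2.2.1)) *
          ∏ y : TtIdx N k d ρ, ttG G y ω ^ ttCnt (ttP z.1 z.2.1.1 z.2.1.2) (ttP z.1 z.2.2.1 z.2.2.2) y := by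
    funext ω
    calc (∑ κ, (f ω κ) ^ 2)
        = ∑ κ : Fin k, ∑ zz : (TtI N d × TtR N ρ) × (TtI N d × TtR N ρ),
            (c ^ 2 * (X zz.1.1 * X zz.2.1)) *
              ∏ y : TtIdx N k d ρ, ttG G y ω ^ ttCnt (ttP κ zz.1.1 zz.1.2) (ttP κ zz.2.1 zz.2.2) y := by
          refine Finset.sum_congr rfl fun κ _ => ?_
          rw [hpoint ω κ]
          exact (Fintype.sum_prod_type (f := fun zz : (TtI N d × TtR N ρ) × (TtI N d × TtR N ρ) =>
            (c ^ 2 * (X zz.1.1 * X zz.2.1)) *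
              ∏ y : TtIdx N k d ρ, ttG G y ω ^ ttCnt (ttP κ zz.1.1 zz.1.2) (ttP κ zz.2.1 zz.2.2) y)).symm
      _ = ∑ z : Fin k × (TtI N d × TtR N ρ) × (TtI N d × TtR N ρ),
            (c ^ 2 * (X z.2.1.1 * X z.2.2.1)) *
              ∏ y : TtIdx N k d ρ, ttG G y ω ^ ttCnt (ttP z.1 z.2.1.1 z.2.1.2) (ttP z.1 z.2.2.1 z.2.2.2) y :=
          (Fintype.sum_prod_type (f := fun z : Fin k × (TtI N d × TtR N ρ) × (TtI N d × TtR N ρ) =>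
            (c ^ 2 * (X z.2.1.1 * X z.2.2.1)) *
              ∏ y : TtIdx N k d ρ, ttG G y ω ^ ttCnt (ttP z.1 z.2.1.1 z.2.1.2) (ttP z.1 z.2.2.1 z.2.2.2) y)).symm
  rw [hrw, integral_finset_sum _ (fun z _ =>
    ((hmono _ (hm2 z.1 z.2.1.1 z.2.2.1 z.2.1.2 z.2.2.2)).1).const_mul _)]
  have heval : ∀ z : Fin k × (TtI N d × TtR N ρ) × (TtI N d × TtR N ρ),
      ∫ ω, (c ^ 2 * (X z.2.1.1 * X z.2.2.1)) *
          ∏ y : TtIdx N k d ρ, ttG G y ω ^ ttCnt (ttP z.1 z.2.1.1 z.2.1.2) (ttP z.1 z.2.2.1 z.2.2.2) y ∂μ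
        = (c ^ 2 * (X z.2.1.1 * X z.2.2.1)) *
            (if z.2.1.1 = z.2.2.1 ∧ z.2.1.2 = z.2.2.2 then 1 else 0) := by
    intro z
    rw [integral_const_mul, hval z.1 z.2.1.1 z.2.2.1 z.2.1.2 z.2.2.2]
  rw [Finset.sum_congr rfl (fun z _ => heval z)]
  -- collapse the diagonal
  have hdiag : ∀ w : TtI N d × TtR N ρ, (∑ w' : TtI N d × TtR N ρ,
      (c ^ 2 * (X w.1 * X w'.1)) * (if w.1 = w'.1 ∧ w.2 = w'.2 then (1:ℝ) else 0))
      = c ^ 2 * X w.1 ^ 2 := by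
    intro w
    rw [Finset.sum_eq_single w]
    · simp [sq]
    · intro w' _ hne
      rw [if_neg, mul_zero]
      intro hcon
      exact hne (Prod.ext hcon.1 hcon.2).symm
    · intro h
      exact absurd (Finset.mem_univ w) h
  have hcollapse : (∑ z : Fin k × (TtI N d × TtR N ρ) × (TtI N d × TtR N ρ),
      (c ^ 2 * (X z.2.1.1 * X z.2.2.1)) *
        (if z.2.1.1 = z.2.2.1 ∧ z.2.1.2 = z.2.2.2 then (1:ℝ) else 0))
      = (k : ℝ) * ((Fintype.card (TtR N ρ) : ℝ) * (c ^ 2 * ∑ i, X i ^ 2)) := by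
    rw [Fintype.sum_prod_type]
    have hsum2 : ∀ κ : Fin k, (∑ zz : (TtI N d × TtR N ρ) × (TtI N d × TtR N ρ),
        (c ^ 2 * (X zz.1.1 * X zz.2.1)) *
          (if zz.1.1 = zz.2.1 ∧ zz.1.2 = zz.2.2 then (1:ℝ) else 0))
        = (Fintype.card (TtR N ρ) : ℝ) * (c ^ 2 * ∑ i, X i ^ 2) := by
      intro κ
      rw [Fintype.sum_prod_type]
      calc (∑ w : TtI N d × TtR N ρ, ∑ w' : TtI N d × TtR N ρ, (c ^ 2 * (X w.1 * X w'.1)) *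
            (if w.1 = w'.1 ∧ w.2 = w'.2 then (1:ℝ) else 0))
          = ∑ w : TtI N d × TtR N ρ, c ^ 2 * X w.1 ^ 2 :=
            Finset.sum_congr rfl fun w _ => hdiag w
        _ = ∑ i : TtI N d, ∑ _r : TtR N ρ, c ^ 2 * X i ^ 2 :=
            Fintype.sum_prod_type (f := fun w : TtI N d × TtR N ρ => c ^ 2 * X w.1 ^ 2)
        _ = (Fintype.card (TtR N ρ) : ℝ) * (c ^ 2 * ∑ i, X i ^ 2) := by
            simp only [Finset.sum_const, Finset.card_univ, nsmul_eq_mul, Finset.mul_sum]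
    rw [Finset.sum_congr rfl (fun κ _ => hsum2 κ), Finset.sum_const, Finset.card_univ,
      Fintype.card_fin, nsmul_eq_mul]
  rw [hcollapse]
  -- final arithmetic
  have hcardR : (Fintype.card (TtR N ρ) : ℝ) = (R : ℝ) ^ (N - 1) := by
    have h1 : Fintype.card (TtR N ρ) = ∏ n : Fin (N + 1), ρ n := by
      rw [Fintype.card_pi]
      exact Finset.prod_congr rfl fun n _ => Fintype.card_fin (ρ n)
    have h0last : (0 : Fin (N + 1)) ≠ Fin.last N := by
      intro h
      have := congrArg Fin.val h
      simp [Fin.last] at this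
      omega
    have hsplit : (∏ n : Fin (N + 1), ρ n)
        = (∏ n ∈ ({0, Fin.last N} : Finset (Fin (N + 1))), ρ n) *
          ∏ n ∈ ({0, Fin.last N} : Finset (Fin (N + 1)))ᶜ, ρ n :=
      (Finset.prod_mul_prod_compl _ _).symm
    have hpair : (∏ n ∈ ({0, Fin.last N} : Finset (Fin (N + 1))), ρ n) = 1 := by
      rw [Finset.prod_pair h0last, hρ0, hρlast]
      norm_num
    have hcompl : (∏ n ∈ ({0, Fin.last N} : Finset (Fin (N + 1)))ᶜ, ρ n) = R ^ (N - 1) := by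
      have hcard : (({0, Fin.last N} : Finset (Fin (N + 1)))ᶜ).card = N - 1 := by
        rw [Finset.card_compl, Finset.card_pair h0last]
        simp
      rw [Finset.prod_congr rfl (fun n hn => ?_), Finset.prod_const, hcard]
      have hn' := Finset.mem_compl.mp hn
      simp only [Finset.mem_insert, Finset.mem_singleton] at hn'
      push_neg at hn'
      exact hρmid n hn'.1 hn'.2
    rw [h1, hsplit, hpair, hcompl, one_mul]
    push_cast
    ring
  have hc2 : c ^ 2 = ((k : ℝ) * (R : ℝ) ^ (N - 1))⁻¹ := by
    rw [hcdef, div_pow, one_pow, Real.sq_sqrt (by positivity)]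
    rw [one_div]
  rw [hcardR, hc2, Finset.mul_sum, Finset.mul_sum, Finset.mul_sum]
  refine Finset.sum_congr rfl fun i _ => ?_
  have hk0 : (k : ℝ) ≠ 0 := by positivity
  have hR0 : (R : ℝ) ^ (N - 1) ≠ 0 := by positivity
  field_simp

end
end
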